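/- For every t \ge 0, the Dickman function satisfies \rho(t) \le 1/\Gamma(t + 1), where \Gamma is the Gamma function. -/

import Mathlib

open Set MeasureTheory intervalIntegral

/-- The Dickman function satisfies `ρ(t) ≤ 1/Γ(t+1)` for all `t ≥ 0`. -/
theorem stmt3 (ρ : ℝ → ℝ)
    (h1 : ∀ t : ℝ, 0 ≤ t → t ≤ 1 → ρ t = 1)
    (hc : ContinuousOn ρ (Set.Ici 0))
    (hd : ∀ t : ℝ, 1 < t → HasDerivAt ρ (-ρ (t - 1) / t) t) :
    ∀ t : ℝ, 0 ≤ t → ρ t ≤ 1 / Real.Gamma (t + 1) := by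
  have hρ1 : ρ 1 = 1 := h1 1 zero_le_one le_rfl
  -- interval integrability on nonnegative intervals
  have hint : ∀ a b : ℝ, 0 ≤ a → 0 ≤ b → IntervalIntegrable ρ volume a b := by
    intro a b ha hb
    exact (hc.mono (by
      intro x hx
      rcases hx with ⟨h1x, _⟩
      have : min a b ≤ x := h1x
      exact le_trans (le_min ha hb) this)).intervalIntegrable
  -- continuity at positive points
  have hca : ∀ x : ℝ, 0 < x → ContinuousAt ρ x := fun x hx =>
    hc.continuousAt (Ici_mem_nhds hx)
  have hmeas : ∀ x : ℝ, 0 < x → StronglyMeasurableAtFilter ρ (nhds x) volume :=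
    fun x hx => ContinuousAt.stronglyMeasurableAtFilter isOpen_Ioi
      (fun y hy => hca y hy) x hx
  set G : ℝ → ℝ := fun x => ∫ u in (0:ℝ)..x, ρ u with hG
  -- continuity of the primitive
  have hGcont : ∀ b : ℝ, 0 ≤ b → ContinuousOn G (Icc 0 b) := by
    intro b hb
    have : IntegrableOn ρ (uIcc 0 b) volume := by
      rw [uIcc_of_le hb]
      exact (hc.mono (by intro x hx; exact hx.1)).integrableOn_Icc
    have := continuousOn_primitive_interval (μ := volume) (a := (0:ℝ)) (b := b) this
    rwa [uIcc_of_le hb] at this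
  -- integral of ρ on [0,1] is 1
  have hI01 : (∫ u in (0:ℝ)..1, ρ u) = 1 := by
    rw [intervalIntegral.integral_congr (g := fun _ => (1:ℝ)) (by
      intro x hx
      rw [uIcc_of_le (zero_le_one)] at hx
      exact h1 x hx.1 hx.2)]
    simp
  -- Key identity: t * ρ t = ∫_{t-1}^t ρ
  have key : ∀ t : ℝ, 1 ≤ t → t * ρ t = ∫ u in (t-1)..t, ρ u := by
    intro b hb
    set F : ℝ → ℝ := fun x => x * ρ x - (G x - G (x - 1)) with hF
    have hFb : F b = F 1 := by
      have hcontF : ContinuousOn F (Icc 1 b) := by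
        have hsub : Icc (1:ℝ) b ⊆ Icc 0 b := Icc_subset_Icc (by norm_num) le_rfl
        have h1' : ContinuousOn (fun x : ℝ => x * ρ x) (Icc 1 b) :=
          continuousOn_id.mul (hc.mono (fun x hx => le_trans zero_le_one hx.1))
        have h2' : ContinuousOn G (Icc 1 b) := (hGcont b (by linarith)).mono hsub
        have h3' : ContinuousOn (fun x : ℝ => G (x - 1)) (Icc 1 b) := by
          apply (hGcont b (by linarith)).comp
            (continuousOn_id.sub continuousOn_const)
          intro x hx
          obtain ⟨hxa, hxb⟩ := hx
          show x - 1 ∈ Icc 0 b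
          exact Set.mem_Icc.mpr ⟨by linarith, by linarith⟩
        exact h1'.sub (h2'.sub h3')
      have hderivF : ∀ x ∈ Ioo (1:ℝ) b, HasDerivWithinAt F 0 (Ioi x) x := by
        intro x hx
        have hx1 : 1 < x := hx.1
        have hx0 : 0 < x := by linarith
        have hx10 : 0 < x - 1 := by linarith
        have hA : HasDerivAt (fun y : ℝ => y * ρ y)
            (1 * ρ x + x * (-ρ (x - 1) / x)) x :=
          (hasDerivAt_id x).mul (hd x hx1)
        have hB : HasDerivAt G (ρ x) x :=
          intervalIntegral.integral_hasDerivAt_right (hint 0 x le_rfl hx0.le)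
            (hmeas x hx0) (hca x hx0)
        have hB' : HasDerivAt G (ρ (x - 1)) (x - 1) :=
          intervalIntegral.integral_hasDerivAt_right (hint 0 (x-1) le_rfl hx10.le)
            (hmeas (x-1) hx10) (hca (x-1) hx10)
        have hC : HasDerivAt (fun y : ℝ => G (y - 1)) (ρ (x - 1) * 1) x :=
          by have := HasDerivAt.comp x hB' ((hasDerivAt_id x).sub_const 1); exact this
        have := hA.sub (hB.sub hC)
        have heq : (1 * ρ x + x * (-ρ (x - 1) / x)) - (ρ x - ρ (x - 1) * 1) = 0 := by
          field_simp
          ring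
        rw [heq] at this
        exact this.hasDerivWithinAt
      have := intervalIntegral.integral_eq_sub_of_hasDeriv_right_of_le hb hcontF
        hderivF (_root_.intervalIntegrable_const (c := (0:ℝ)))
      have h0 : F b - F 1 = 0 := by simpa using this.symm
      linarith
    have hF1 : F 1 = 0 := by
      have hG1 : G 1 = 1 := hI01
      have hG0 : G 0 = 0 := intervalIntegral.integral_same
      show (1:ℝ) * ρ 1 - (G 1 - G (1 - 1)) = 0
      norm_num [hρ1, hG1, hG0]
    have : F b = 0 := hFb.trans hF1
    have hsplit : G b - G (b - 1) = ∫ u in (b-1)..b, ρ u :=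
      intervalIntegral.integral_interval_sub_left (hint 0 b le_rfl (by linarith))
        (hint 0 (b-1) le_rfl (by linarith))
    have : b * ρ b - (G b - G (b - 1)) = 0 := this
    linarith [hsplit ▸ this]
  -- Positivity
  have pos : ∀ t : ℝ, 0 ≤ t → 0 < ρ t := by
    by_contra hcon
    push_neg at hcon
    obtain ⟨t, ht0, htle⟩ := hcon
    -- a zero exists
    have ht1 : 1 < t := by
      by_contra h
      push_neg at h
      rw [h1 t ht0 h] at htle; linarith
    set S : Set ℝ := Ici 1 ∩ ρ ⁻¹' {0} with hS
    have hSne : S.Nonempty := by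
      have hIcc : ContinuousOn ρ (Icc 1 t) :=
        hc.mono (fun x hx => le_trans zero_le_one hx.1)
      have := intermediate_value_Icc' ht1.le hIcc
      have h0mem : (0:ℝ) ∈ Icc (ρ t) (ρ 1) := by
        constructor
        · exact htle
        · rw [hρ1]; norm_num
      obtain ⟨z, hz, hz0⟩ := this h0mem
      exact ⟨z, hz.1, hz0⟩
    have hSclosed : IsClosed S := by
      apply ContinuousOn.preimage_isClosed_of_isClosed
        (hc.mono (fun x (hx : 1 ≤ x) => le_trans zero_le_one hx))
        isClosed_Ici isClosed_singleton
    have hSbdd : BddBelow S := ⟨1, fun x hx => hx.1⟩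
    set t0 : ℝ := sInf S with ht0def
    have ht0mem : t0 ∈ S := hSclosed.csInf_mem hSne hSbdd
    have ht0ge : 1 ≤ t0 := ht0mem.1
    have hρt0 : ρ t0 = 0 := ht0mem.2
    have ht0gt : 1 < t0 := by
      rcases lt_or_eq_of_le ht0ge with h | h
      · exact h
      · rw [← h] at hρt0; rw [hρ1] at hρt0; norm_num at hρt0
    -- ρ positive strictly before t0
    have hposlt : ∀ s : ℝ, 0 ≤ s → s < t0 → 0 < ρ s := by
      intro s hs0 hst0
      by_contra hcon2
      push_neg at hcon2
      have hs1 : 1 < s := by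
        by_contra h
        push_neg at h
        rw [h1 s hs0 h] at hcon2; linarith
      have hIcc : ContinuousOn ρ (Icc 1 s) :=
        hc.mono (fun x hx => le_trans zero_le_one hx.1)
      obtain ⟨z, hz, hz0⟩ := intermediate_value_Icc' hs1.le hIcc
        (show (0:ℝ) ∈ Icc (ρ s) (ρ 1) by
          constructor
          · exact hcon2
          · rw [hρ1]; norm_num)
      have : t0 ≤ z := csInf_le hSbdd ⟨hz.1, hz0⟩
      linarith [hz.2]
    -- contradiction with the key identity at t0
    have hid := key t0 ht0ge
    rw [hρt0, mul_zero] at hid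
    have hpos : 0 < ∫ u in (t0-1)..t0, ρ u := by
      apply intervalIntegral_pos_of_pos_on (hint (t0-1) t0 (by linarith) (by linarith))
      · intro x hx
        exact hposlt x (by linarith [hx.1]) hx.2
      · linarith
    linarith [hid ▸ hpos]
  -- Antitone on [1, ∞)
  have hanti : AntitoneOn ρ (Ici 1) := by
    apply antitoneOn_of_deriv_nonpos (convex_Ici 1)
      (hc.mono (fun x (hx : 1 ≤ x) => le_trans zero_le_one hx))
    · intro x hx
      rw [interior_Ici] at hx
      exact (hd x hx).differentiableAt.differentiableWithinAt
    · intro x hx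
      rw [interior_Ici] at hx
      have hx' : (1:ℝ) < x := hx
      rw [(hd x hx').deriv]
      apply div_nonpos_of_nonpos_of_nonneg
      · simpa using (pos (x-1) (by linarith)).le
      · linarith
  -- Full monotonicity statement
  have mono : ∀ s t : ℝ, 0 ≤ s → s ≤ t → ρ t ≤ ρ s := by
    intro s t hs hst
    rcases le_or_gt s 1 with h | h
    · rcases le_or_gt t 1 with h' | h'
      · rw [h1 s hs h, h1 t (le_trans hs hst) h']
      · rw [h1 s hs h, ← hρ1]
        exact hanti self_mem_Ici h'.le h'.le
    · exact hanti h.le (by simp; linarith) hst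
  -- The step inequality
  have step : ∀ t : ℝ, 1 < t → t * ρ t ≤ ρ (t - 1) := by
    intro t ht
    rw [key t ht.le]
    have : (∫ u in (t-1)..t, ρ u) ≤ ∫ _u in (t-1)..t, ρ (t - 1) := by
      apply intervalIntegral.integral_mono_on (by linarith)
        (hint (t-1) t (by linarith) (by linarith)) _root_.intervalIntegrable_const
      intro x hx
      exact mono (t-1) x (by linarith) hx.1
    simpa using this
  -- Gamma ≤ 1 on [1,2]
  have gamle : ∀ s : ℝ, 0 ≤ s → s ≤ 1 → Real.Gamma (s + 1) ≤ 1 := by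
    intro s hs0 hs1
    have h12 : (1:ℝ) ∈ Ioi (0:ℝ) := by norm_num
    have h22 : (2:ℝ) ∈ Ioi (0:ℝ) := by norm_num
    have := Real.convexOn_Gamma.2 h12 h22
      (show (0:ℝ) ≤ 1 - s by linarith) hs0 (show (1 - s) + s = 1 by ring)
    rw [Real.Gamma_one, Real.Gamma_two] at this
    have heq : (1 - s) • (1:ℝ) + s • (2:ℝ) = s + 1 := by
      simp [smul_eq_mul]; ring
    rw [heq] at this
    calc Real.Gamma (s + 1) ≤ (1 - s) • 1 + s • 1 := this
      _ = 1 := by simp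
  -- Main induction
  have main : ∀ n : ℕ, ∀ t : ℝ, 0 ≤ t → t ≤ n + 1 → ρ t * Real.Gamma (t + 1) ≤ 1 := by
    intro n
    induction n with
    | zero =>
      intro t ht0 ht1
      rw [h1 t ht0 (by exact_mod_cast by simpa using ht1)]
      rw [one_mul]
      exact gamle t ht0 (by exact_mod_cast by simpa using ht1)
    | succ n ih =>
      intro t ht0 ht2
      rcases le_or_gt t (n + 1) with h | h
      · exact ih t ht0 h
      · have ht1 : 1 < t := by
          have : (1:ℝ) ≤ n + 1 := by
            have : (0:ℝ) ≤ n := Nat.cast_nonneg n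
            linarith
          linarith
        have htne : t ≠ 0 := by linarith
        rw [Real.Gamma_add_one htne]
        have hΓpos : 0 ≤ Real.Gamma t := (Real.Gamma_pos_of_pos (by linarith)).le
        calc ρ t * (t * Real.Gamma t) = (t * ρ t) * Real.Gamma t := by ring
          _ ≤ ρ (t - 1) * Real.Gamma t :=
            mul_le_mul_of_nonneg_right (step t ht1) hΓpos
          _ = ρ (t - 1) * Real.Gamma ((t - 1) + 1) := by ring_nf
          _ ≤ 1 := by
            apply ih (t - 1) (by linarith)
            push_cast at ht2 ⊢
            linarith
  -- conclude
  intro t ht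
  have hΓpos : 0 < Real.Gamma (t + 1) := Real.Gamma_pos_of_pos (by linarith)
  rw [le_div_iff₀ hΓpos]
  exact main ⌊t⌋₊ t ht (by
    have := Nat.lt_floor_add_one t
    push_cast
    linarith)
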